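/- There is no constant C such that every biplanar graph G satisfies χ_o(G) ≤ C; i.e., the odd chromatic number is unbounded on the class of graphs of thickness at most 2. -/

import Mathlib

open SimpleGraph

/-- The degree of a vertex, as the cardinality of its neighbor set. -/
noncomputable def deg {V : Type} (G : SimpleGraph V) (v : V) : ℕ := (G.neighborSet v).ncard

/-- `H` is a minor of `G`, via branch sets. -/
def IsMinor {W V : Type} (H : SimpleGraph W) (G : SimpleGraph V) : Prop :=
  ∃ B : W → Set V,
    (∀ w, (B w).Nonempty) ∧
    (∀ w, (G.induce (B w)).Connected) ∧
    (Pairwise fun w₁ w₂ => Disjoint (B w₁) (B w₂)) ∧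
    (∀ w₁ w₂, H.Adj w₁ w₂ → ∃ v₁ ∈ B w₁, ∃ v₂ ∈ B w₂, G.Adj v₁ v₂)

/-- A graph is planar iff it has no `K₅` and no `K₃,₃` minor (Wagner's theorem). -/
def IsPlanar {V : Type} (G : SimpleGraph V) : Prop :=
  ¬ IsMinor (completeGraph (Fin 5)) G ∧
  ¬ IsMinor (completeBipartiteGraph (Fin 3) (Fin 3)) G

/-- `G` has thickness at most `t`: its edge set partitions into `t` planar subgraphs. -/
def ThicknessLE {V : Type} (G : SimpleGraph V) (t : ℕ) : Prop :=
  ∃ c : Sym2 V → Fin t, ∀ i : Fin t,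
    IsPlanar (SimpleGraph.fromEdgeSet {e | e ∈ G.edgeSet ∧ c e = i})

/-- The thickness of a graph. -/
noncomputable def thickness {V : Type} (G : SimpleGraph V) : ℕ :=
  sInf {t | ThicknessLE G t}

/-- `φ` is an odd coloring of `G` with `k` colors. -/
def IsOddColoring {V : Type} (G : SimpleGraph V) {k : ℕ} (φ : V → Fin k) : Prop :=
  (∀ ⦃u v⦄, G.Adj u v → φ u ≠ φ v) ∧
  ∀ v : V, (G.neighborSet v).Nonempty →
    ∃ c : Fin k, Odd ({u | u ∈ G.neighborSet v ∧ φ u = c}.ncard)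

/-- The odd chromatic number of `G`. -/
noncomputable def oddChrom {V : Type} (G : SimpleGraph V) : ℕ :=
  sInf {k | ∃ φ : V → Fin k, IsOddColoring G φ}

/-- `G` is odd `k⁺`-critical. -/
def OddCritical {V : Type} (G : SimpleGraph V) (k : ℕ) : Prop :=
  k ≤ oddChrom G ∧ ∀ H : G.Subgraph, H ≠ ⊤ → oddChrom H.coe < k

/-- A vertex is `n`-easy if its degree is odd or it has a neighbor of degree `2i`, `1 ≤ i ≤ n`. -/
def NEasy {V : Type} (G : SimpleGraph V) (n : ℕ) (v : V) : Prop :=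
  Odd (deg G v) ∨ ∃ u ∈ G.neighborSet v, ∃ i, 1 ≤ i ∧ i ≤ n ∧ deg G u = 2 * i


-- AUX (to be placed above the theorem, with the pinned defs)
section OddUnbounded

private def gAdj (n : ℕ) : (Fin n ⊕ Fin n × Fin n) → (Fin n ⊕ Fin n × Fin n) → Prop
  | .inl a, .inr p => p.1 < p.2 ∧ (a = p.1 ∨ a = p.2)
  | .inr p, .inl a => p.1 < p.2 ∧ (a = p.1 ∨ a = p.2)
  | _, _ => False

private def Gn (n : ℕ) : SimpleGraph (Fin n ⊕ Fin n × Fin n) where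
  Adj := gAdj n
  symm := ⟨by rintro (a | p) (b | q) h <;> simp_all [gAdj]⟩
  loopless := ⟨by rintro (a | p) h <;> simp_all [gAdj]⟩

private def ecol (n : ℕ) : (Fin n ⊕ Fin n × Fin n) → (Fin n ⊕ Fin n × Fin n) → Fin 2
  | .inl a, .inr p => if a = p.1 then 0 else 1
  | .inr p, .inl a => if a = p.1 then 0 else 1
  | _, _ => 1

private lemma ecol_symm (n : ℕ) : ∀ u v, ecol n u v = ecol n v u := by
  rintro (a | p) (b | q) <;> simp [ecol]

private noncomputable def ec (n : ℕ) : Sym2 (Fin n ⊕ Fin n × Fin n) → Fin 2 :=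
  Sym2.lift ⟨ecol n, ecol_symm n⟩

private lemma part_adj (n : ℕ) (t : Fin 2) (u v : Fin n ⊕ Fin n × Fin n) :
    (fromEdgeSet {e | e ∈ (Gn n).edgeSet ∧ ec n e = t}).Adj u v ↔
      (Gn n).Adj u v ∧ ecol n u v = t := by
  rw [fromEdgeSet_adj]
  constructor
  · rintro ⟨⟨h1, h2⟩, -⟩
    exact ⟨h1, by simpa [ec] using h2⟩
  · rintro ⟨h1, h2⟩
    exact ⟨⟨h1, by simpa [ec] using h2⟩, h1.ne⟩

private lemma nbr_in_conn {V : Type} (G : SimpleGraph V) (S : Set V) (h : (G.induce S).Connected)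
    {x y : V} (hx : x ∈ S) (hy : y ∈ S) (hxy : x ≠ y) : ∃ z ∈ S, G.Adj x z := by
  obtain ⟨p⟩ := h.preconnected ⟨x,hx⟩ ⟨y,hy⟩
  cases p with
  | nil => exact absurd rfl hxy
  | @cons _ b _ ha p => exact ⟨b.1, b.2, by simpa using ha⟩

private lemma no_minor_aux {V W : Type} (G : SimpleGraph V) (A : Set V)
    (h1 : ∀ u v, G.Adj u v → (u ∈ A ↔ v ∉ A))
    (h2 : ∀ b u v, b ∉ A → G.Adj b u → G.Adj b v → u = v)
    (H : SimpleGraph W) (hM : IsMinor H G) (w w' w₂ w₃ : W)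
    (hww' : H.Adj w w') (ha2 : H.Adj w w₂) (ha3 : H.Adj w' w₃)
    (hne2 : w₂ ≠ w') (hne3 : w₃ ≠ w) : False := by
  obtain ⟨B, hBne, hconn, hdisj, hadj⟩ := hM
  have core : ∀ a a' a'' : W, H.Adj a a' → H.Adj a' a'' → a'' ≠ a →
      ∀ x ∈ B a, ∀ y ∈ B a', y ∉ A → G.Adj x y → False := by
    intro a a' a'' haa' ha'a'' hne'' x hx y hy hyA hxy
    obtain ⟨x₂, hx₂, y₂, hy₂, hadj2⟩ := hadj a' a'' ha'a''
    by_cases hx2y : x₂ = y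
    · subst hx2y
      have hyx : y₂ = x := h2 x₂ y₂ x hyA hadj2 hxy.symm
      subst hyx
      exact Set.disjoint_left.1 (hdisj hne''.symm) hx hy₂
    · obtain ⟨z, hz, hyz⟩ := nbr_in_conn G (B a') (hconn a') hy hx₂ (fun h => hx2y h.symm)
      have hzx : z = x := h2 y z x hyA hyz hxy.symm
      subst hzx
      exact Set.disjoint_left.1 (hdisj haa'.ne) hx hz
  obtain ⟨x, hx, y, hy, hGxy⟩ := hadj w w' hww'
  by_cases hyA : y ∈ A
  · have hxA : x ∉ A := fun h => ((h1 x y hGxy).1 h) hyA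
    exact core w' w w₂ hww'.symm ha2 hne2 y hy x hx hxA hGxy.symm
  · exact core w w' w₃ hww' ha3 hne3 x hx y hy hyA hGxy

private lemma isPlanar_of_star {V : Type} (G : SimpleGraph V) (A : Set V)
    (h1 : ∀ u v, G.Adj u v → (u ∈ A ↔ v ∉ A))
    (h2 : ∀ b u v, b ∉ A → G.Adj b u → G.Adj b v → u = v) : IsPlanar G := by
  constructor
  · intro hM
    exact no_minor_aux G A h1 h2 _ hM 0 1 2 2 (by simp [completeGraph]) (by simp [completeGraph])
      (by simp [completeGraph]) (by decide) (by decide)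
  · intro hM
    exact no_minor_aux G A h1 h2 _ hM (Sum.inl 0) (Sum.inr 0) (Sum.inr 1) (Sum.inl 1)
      (by simp) (by simp) (by simp) (by simp) (by simp)

private lemma thick_Gn (n : ℕ) : ThicknessLE (Gn n) 2 := by
  refine ⟨ec n, fun t => ?_⟩
  apply isPlanar_of_star _ (Set.range Sum.inl)
  · intro u v h
    rw [part_adj] at h
    have := h.1
    rcases u with a | p <;> rcases v with b | q <;> simp_all [Gn, gAdj]
  · intro b u v hb hbu hbv
    rw [part_adj] at hbu hbv
    rcases b with a | p
    · exact absurd ⟨a, rfl⟩ hb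
    have key : ∀ u, (Gn n).Adj (.inr p) u → ecol n (.inr p) u = t →
        u = (if t = 0 then Sum.inl p.1 else Sum.inl p.2) := by
      rintro (a | q) hadj hcol
      · simp only [Gn, gAdj] at hadj
        simp only [ecol] at hcol
        by_cases ha : a = p.1
        · subst ha; simp_all
        · rcases hadj.2 with h | h
          · exact absurd h ha
          · subst h
            rw [if_neg ha] at hcol
            rw [← hcol]
            simp
      · simp only [Gn, gAdj] at hadj
    rw [key u hbu.1 hbu.2, key v hbv.1 hbv.2]

private lemma Gn_nbr (n : ℕ) (i j : Fin n) (hij : i < j) :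
    (Gn n).neighborSet (.inr (i,j)) = {Sum.inl i, Sum.inl j} := by
  ext u
  rcases u with a | p <;> simp [neighborSet, Gn, gAdj, hij]

private lemma Gn_inl_ne (n : ℕ) {k : ℕ} (φ : (Fin n ⊕ Fin n × Fin n) → Fin k)
    (hodd : ∀ v, ((Gn n).neighborSet v).Nonempty →
      ∃ c : Fin k, Odd ({u | u ∈ (Gn n).neighborSet v ∧ φ u = c}.ncard))
    {i j : Fin n} (hij : i < j) : φ (.inl i) ≠ φ (.inl j) := by
  intro heq
  have hN := Gn_nbr n i j hij
  obtain ⟨c, hc⟩ := hodd (.inr (i,j)) ⟨Sum.inl i, by rw [hN]; left; rfl⟩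
  have hne : (Sum.inl i : Fin n ⊕ Fin n × Fin n) ≠ Sum.inl j := by
    simp [hij.ne]
  by_cases hci : φ (.inl i) = c
  · have hT : {u | u ∈ (Gn n).neighborSet (.inr (i,j)) ∧ φ u = c}
        = {Sum.inl i, Sum.inl j} := by
      ext u
      rw [Set.mem_setOf_eq, hN]
      constructor
      · exact fun h => h.1
      · rintro (rfl | rfl)
        · exact ⟨Or.inl rfl, hci⟩
        · exact ⟨Or.inr rfl, heq ▸ hci⟩
    rw [hT, Set.ncard_pair hne] at hc
    exact (by decide : ¬ Odd 2) hc
  · have hT : {u | u ∈ (Gn n).neighborSet (.inr (i,j)) ∧ φ u = c} = ∅ := by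
      ext u
      rw [Set.mem_setOf_eq, hN]
      simp only [Set.mem_empty_iff_false, iff_false, not_and]
      rintro (rfl | rfl)
      · exact hci
      · exact fun h => hci (heq ▸ h)
    rw [hT] at hc
    simp at hc

private lemma oddColoring_exists (n : ℕ) :
    Fintype.card (Fin n ⊕ Fin n × Fin n) ∈
      {k | ∃ φ : (Fin n ⊕ Fin n × Fin n) → Fin k, IsOddColoring (Gn n) φ} := by
  refine ⟨Fintype.equivFin _, fun u v huv h => huv.ne ((Fintype.equivFin _).injective h), ?_⟩
  rintro v ⟨u, hu⟩
  refine ⟨Fintype.equivFin _ u, ?_⟩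
  have hT : {u' | u' ∈ (Gn n).neighborSet v ∧ Fintype.equivFin _ u' = Fintype.equivFin _ u}
      = {u} := by
    ext u'
    constructor
    · rintro ⟨-, h⟩
      exact (Fintype.equivFin _).injective h
    · rintro rfl
      exact ⟨hu, rfl⟩
  rw [hT, Set.ncard_singleton]
  exact odd_one

private lemma oddChrom_lb (n : ℕ) {k : ℕ}
    (h : ∃ φ : (Fin n ⊕ Fin n × Fin n) → Fin k, IsOddColoring (Gn n) φ) : n ≤ k := by
  obtain ⟨φ, -, hodd⟩ := h
  have hinj : Function.Injective (fun i : Fin n => φ (.inl i)) := by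
    intro i j hij
    by_contra hne
    rcases Ne.lt_or_gt hne with h | h
    · exact Gn_inl_ne n φ hodd h hij
    · exact Gn_inl_ne n φ hodd h hij.symm
  simpa using Fintype.card_le_of_injective _ hinj

end OddUnbounded

/-- The odd chromatic number is unbounded on the class of graphs of thickness at most 2. -/
theorem oddChrom_unbounded_on_biplanar :
    ∀ C : ℕ, ∃ (V : Type) (_ : Fintype V) (G : SimpleGraph V),
      thickness G ≤ 2 ∧ C < oddChrom G := by
  intro C
  refine ⟨Fin (C+2) ⊕ Fin (C+2) × Fin (C+2), inferInstance, Gn (C+2), ?_, ?_⟩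
  · exact Nat.sInf_le (thick_Gn (C+2))
  · have hmem := oddColoring_exists (C+2)
    have h := Nat.sInf_mem ⟨_, hmem⟩
    have := oddChrom_lb (C+2) h
    unfold oddChrom
    omega
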